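/- Let n ≥ 1, let J be a subset of {1,…,n−1}, let h_j (j ∈ J) be integrable complex-valued functions on [0,∞), and let t > 0. Set k = n − |J|. Then lim_{ξ→0⁺} ξ^{−|J|} ∫_0^t dt_1 ∫_0^{t_1} dt_2 … ∫_0^{t_{n−1}} dt_n Π_{j∈J} h_j((t_j − t_{j+1})/ξ) = (t^k / k!) · Π_{j∈J} ∫_0^∞ h_j(s) ds. -/

import Mathlib

open MeasureTheory Filter intervalIntegral
open scoped Topology

/-- The iterated simplex integral with a chain of (possibly trivial) rescaled
two-point kernels:
`chainKernelIntegral h ξ m s = ∫_0^s du h_{m-1}((s−u)/ξ) ⋅ chainKernelIntegral h ξ (m-1) u`,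
so that `∫_0^t chainKernelIntegral h ξ (n-1) t₁ dt₁` is the `n`-fold simplex integral
`∫_0^t dt₁ ∫_0^{t₁} dt₂ ⋯ ∫_0^{t_{n-1}} dt_n Π_{j=1}^{n-1} h_j((t_j − t_{j+1})/ξ)`
(with the kernels relabelled by `j ↦ n−1−j`). -/
noncomputable def chainKernelIntegral (h : ℕ → ℝ → ℂ) (ξ : ℝ) : ℕ → ℝ → ℂ
  | 0, _ => 1
  | (m + 1), s => ∫ u in (0 : ℝ)..s, h m ((s - u) / ξ) * chainKernelIntegral h ξ m u

namespace LowDensityAux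

lemma chain_zero (g : ℕ → ℝ → ℂ) (ξ : ℝ) (s : ℝ) : chainKernelIntegral g ξ 0 s = 1 := rfl

lemma chain_succ (g : ℕ → ℝ → ℂ) (ξ : ℝ) (m : ℕ) (s : ℝ) :
    chainKernelIntegral g ξ (m + 1) s
      = ∫ u in (0 : ℝ)..s, g m ((s - u) / ξ) * chainKernelIntegral g ξ m u := rfl

lemma subst_eq {g : ℕ → ℝ → ℂ} {ξ : ℝ} (hξ : 0 < ξ) (m : ℕ) (s : ℝ) :
    chainKernelIntegral g ξ (m + 1) s
      = ξ • ∫ v in (0 : ℝ)..(s / ξ), g m v * chainKernelIntegral g ξ m (s - ξ * v) := by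
  rw [chain_succ]
  have h1 : (fun v : ℝ => g m v * chainKernelIntegral g ξ m (s - ξ * v))
      = fun v : ℝ =>
        (fun u => g m ((s - u) / ξ) * chainKernelIntegral g ξ m u) (s - ξ * v) := by
    funext v
    have hv : (s - (s - ξ * v)) / ξ = v := by field_simp; ring
    simp only [hv]
  have key := intervalIntegral.smul_integral_comp_sub_mul
    (f := fun u => g m ((s - u) / ξ) * chainKernelIntegral g ξ m u) (a := 0) (b := s / ξ) ξ s
  rw [h1, key]
  have h2 : s - ξ * (s / ξ) = 0 := by field_simp; ring
  rw [h2, mul_zero, sub_zero]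

lemma interval_eq_indicator {E : Type*} [NormedAddCommGroup E] [NormedSpace ℝ E]
    {c : ℝ} (hc : 0 ≤ c) (f : ℝ → E) :
    ∫ v in (0 : ℝ)..c, f v
      = ∫ v in Set.Ioi (0 : ℝ), (Set.Ioc (0 : ℝ) c).indicator f v := by
  rw [MeasureTheory.integral_indicator measurableSet_Ioc, Measure.restrict_restrict measurableSet_Ioc,
    Set.inter_eq_self_of_subset_left Set.Ioc_subset_Ioi_self,
    intervalIntegral.integral_of_le hc]

lemma filter_lt_succ_of_mem (J : Finset ℕ) {m : ℕ} (hm : m ∈ J) :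
    J.filter (fun j => j < m + 1) = insert m (J.filter (fun j => j < m)) := by
  ext j
  simp only [Finset.mem_filter, Finset.mem_insert, Nat.lt_succ_iff]
  constructor
  · rintro ⟨hj, hle⟩
    rcases eq_or_lt_of_le hle with h | h
    · exact Or.inl h
    · exact Or.inr ⟨hj, h⟩
  · rintro (rfl | ⟨hj, hlt⟩)
    · exact ⟨hm, le_rfl⟩
    · exact ⟨hj, hlt.le⟩

lemma filter_lt_succ_of_not_mem (J : Finset ℕ) {m : ℕ} (hm : m ∉ J) :
    J.filter (fun j => j < m + 1) = J.filter (fun j => j < m) := by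
  ext j
  simp only [Finset.mem_filter, Nat.lt_succ_iff]
  constructor
  · rintro ⟨hj, hle⟩
    refine ⟨hj, lt_of_le_of_ne hle ?_⟩
    rintro rfl; exact hm hj
  · rintro ⟨hj, hlt⟩; exact ⟨hj, hlt.le⟩

lemma card_filter_lt_le (J : Finset ℕ) (m : ℕ) : (J.filter (fun j => j < m)).card ≤ m := by
  calc (J.filter (fun j => j < m)).card ≤ (Finset.range m).card :=
        Finset.card_le_card (fun j hj => Finset.mem_range.2 (Finset.mem_filter.1 hj).2)
    _ = m := Finset.card_range m

/-- quasi measure preserving affine map -/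
lemma qmp_affine {ξ : ℝ} (hξ : 0 < ξ) (s : ℝ) :
    Measure.QuasiMeasurePreserving (fun u : ℝ => (s - u) / ξ) volume volume := by
  have h1 : Measure.QuasiMeasurePreserving (fun u : ℝ => s - u) volume volume :=
    (Measure.measurePreserving_sub_left volume s).quasiMeasurePreserving
  have h2 : Measure.QuasiMeasurePreserving (fun x : ℝ => ξ⁻¹ * x) volume volume := by
    refine ⟨measurable_const_mul _, ?_⟩
    rw [Real.map_volume_mul_left (inv_ne_zero hξ.ne')]
    exact Measure.smul_absolutelyContinuous
  have hco : (fun u : ℝ => (s - u) / ξ) = (fun x : ℝ => ξ⁻¹ * x) ∘ (fun u : ℝ => s - u) := by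
    funext u; simp [Function.comp, div_eq_inv_mul]
  rw [hco]
  exact h2.comp h1

lemma chain_congr (g₁ g₂ : ℕ → ℝ → ℂ)
    (hae : ∀ j, g₁ j =ᵐ[volume.restrict (Set.Ici (0 : ℝ))] g₂ j) {ξ : ℝ} (hξ : 0 < ξ) :
    ∀ m, ∀ s : ℝ, 0 ≤ s → chainKernelIntegral g₁ ξ m s = chainKernelIntegral g₂ ξ m s := by
  intro m
  induction m with
  | zero => intro s _; rfl
  | succ m ih =>
    intro s hs
    rw [chain_succ, chain_succ, intervalIntegral.integral_of_le hs,
      intervalIntegral.integral_of_le hs]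
    apply setIntegral_congr_ae measurableSet_Ioc
    have h0 : ∀ᵐ x ∂(volume : Measure ℝ), x ∈ Set.Ici (0 : ℝ) → g₁ m x = g₂ m x :=
      (ae_restrict_iff' measurableSet_Ici).1 (hae m)
    have h1 : ∀ᵐ u ∂(volume : Measure ℝ),
        ((s - u) / ξ ∈ Set.Ici (0 : ℝ) → g₁ m ((s - u) / ξ) = g₂ m ((s - u) / ξ)) :=
      (qmp_affine hξ s).ae h0
    filter_upwards [h1] with u hu humem
    have harg : (s - u) / ξ ∈ Set.Ici (0 : ℝ) :=
      div_nonneg (by linarith [humem.2] : (0 : ℝ) ≤ s - u) hξ.le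
    rw [hu harg, ih u humem.1.le]


def cardJ (J : Finset ℕ) (m : ℕ) : ℕ := (J.filter (fun j => j < m)).card

def KK (J : Finset ℕ) (m : ℕ) : ℕ := m - cardJ J m

noncomputable def PB (J : Finset ℕ) (g : ℕ → ℝ → ℂ) (m : ℕ) : ℝ :=
  ∏ j ∈ J.filter (fun j => j < m), ∫ v in Set.Ioi (0 : ℝ), ‖g j v‖

noncomputable def LF (J : Finset ℕ) (g : ℕ → ℝ → ℂ) (m : ℕ) (s : ℝ) : ℂ :=
  (s : ℂ) ^ KK J m / (KK J m).factorial
    * ∏ j ∈ J.filter (fun j => j < m), ∫ v in Set.Ioi (0 : ℝ), g j v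

lemma PB_nonneg (J : Finset ℕ) (g : ℕ → ℝ → ℂ) (m : ℕ) : 0 ≤ PB J g m :=
  Finset.prod_nonneg fun j _ => integral_nonneg fun v => norm_nonneg _

lemma aesm_ind {gm : ℝ → ℂ} (hgm : StronglyMeasurable gm) {F : ℝ → ℂ}
    (hF : ContinuousOn F (Set.Ici (0 : ℝ))) {ξ : ℝ} (hξ : 0 < ξ) (a : ℝ) :
    AEStronglyMeasurable
      ((Set.Ioc (0 : ℝ) (a / ξ)).indicator (fun v => gm v * F (a - ξ * v)))
      (volume.restrict (Set.Ioi (0 : ℝ))) := by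
  rw [aestronglyMeasurable_indicator_iff measurableSet_Ioc,
    Measure.restrict_restrict measurableSet_Ioc,
    Set.inter_eq_self_of_subset_left Set.Ioc_subset_Ioi_self]
  have hcomp : ContinuousOn (fun v : ℝ => F (a - ξ * v)) (Set.Ioc (0 : ℝ) (a / ξ)) := by
    apply hF.comp ((continuous_const.sub (continuous_const.mul continuous_id)).continuousOn)
    intro v hv
    have h2 : ξ * v ≤ a := by
      rw [← le_div_iff₀' hξ]; exact hv.2
    simp only [Set.mem_Ici, id_eq, Pi.sub_apply, Pi.mul_apply]; linarith
  exact hgm.aestronglyMeasurable.restrict.mul (hcomp.aestronglyMeasurable measurableSet_Ioc)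

lemma FmIntInt {g : ℕ → ℝ → ℂ} {ξ : ℝ} {m : ℕ}
    (hc : ContinuousOn (chainKernelIntegral g ξ m) (Set.Ici (0 : ℝ))) {s : ℝ} (hs : 0 ≤ s) :
    IntervalIntegrable (chainKernelIntegral g ξ m) volume 0 s := by
  apply ContinuousOn.intervalIntegrable
  apply hc.mono
  rw [Set.uIcc_of_le hs]
  exact fun x hx => hx.1

lemma affcont {g : ℕ → ℝ → ℂ} {ξ : ℝ} {m : ℕ} (hξ : 0 < ξ)
    (hc : ContinuousOn (chainKernelIntegral g ξ m) (Set.Ici (0 : ℝ))) {s : ℝ} (hs : 0 ≤ s) :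
    ContinuousOn (fun v : ℝ => chainKernelIntegral g ξ m (s - ξ * v)) (Set.uIcc 0 (s / ξ)) := by
  apply hc.comp ((continuous_const.sub (continuous_const.mul continuous_id)).continuousOn)
  rw [Set.uIcc_of_le (div_nonneg hs hξ.le)]
  intro v hv
  have h2 : ξ * v ≤ s := by rw [← le_div_iff₀' hξ]; exact hv.2
  simp only [Set.mem_Ici, id_eq, Pi.sub_apply, Pi.mul_apply]; linarith

lemma key (J : Finset ℕ) (g : ℕ → ℝ → ℂ)
    (hg1 : ∀ j ∉ J, ∀ x : ℝ, g j x = 1)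
    (hgm : ∀ j ∈ J, StronglyMeasurable (g j))
    (hgi : ∀ j ∈ J, IntegrableOn (g j) (Set.Ici (0 : ℝ))) :
    ∀ m : ℕ,
      (∀ ξ : ℝ, 0 < ξ → ContinuousOn (chainKernelIntegral g ξ m) (Set.Ici (0 : ℝ)))
      ∧ (∀ ξ : ℝ, 0 < ξ → ∀ s : ℝ, 0 ≤ s →
          ‖chainKernelIntegral g ξ m s‖
            ≤ ξ ^ cardJ J m * PB J g m * s ^ KK J m / (KK J m).factorial)
      ∧ (∀ s : ℝ, 0 < s → ∀ σ : ℝ → ℝ, Tendsto σ (𝓝[>] (0 : ℝ)) (𝓝 s) →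
          (∀ᶠ ξ : ℝ in 𝓝[>] (0 : ℝ), 0 ≤ σ ξ) →
          Tendsto (fun ξ : ℝ => (1 / (ξ : ℂ) ^ cardJ J m) * chainKernelIntegral g ξ m (σ ξ))
            (𝓝[>] (0 : ℝ)) (𝓝 (LF J g m s))) := by
  intro m
  induction m with
  | zero =>
    have hcard : cardJ J 0 = 0 := by simp [cardJ]
    have hK : KK J 0 = 0 := by simp [KK, hcard]
    refine ⟨?_, ?_, ?_⟩
    · intro ξ _
      have : chainKernelIntegral g ξ 0 = fun _ => 1 := funext fun s => chain_zero g ξ s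
      rw [this]; exact continuousOn_const
    · intro ξ hξ s _
      rw [chain_zero, hcard, hK]
      simp [PB, cardJ]
    · intro s _ σ _ _
      have h1 : (fun ξ : ℝ => (1 / (ξ : ℂ) ^ cardJ J 0) * chainKernelIntegral g ξ 0 (σ ξ))
          = fun _ => 1 := by
        funext ξ; rw [chain_zero, hcard]; simp
      have h2 : LF J g 0 s = 1 := by simp [LF, hK, cardJ]
      rw [h1, h2]; exact tendsto_const_nhds
  | succ m ih =>
    obtain ⟨ihc, ihb, ihv⟩ := ih
    have hcle : cardJ J m ≤ m := card_filter_lt_le J m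
    have hKfac : (0:ℝ) < (KK J m).factorial := by positivity
    by_cases hm : m ∈ J
    · -- kernel case
      have hnotm : m ∉ J.filter (fun j => j < m) := by simp
      have hcard : cardJ J (m+1) = cardJ J m + 1 := by
        unfold cardJ
        rw [filter_lt_succ_of_mem J hm, Finset.card_insert_of_notMem hnotm]
      have hK : KK J (m+1) = KK J m := by
        unfold KK; rw [hcard]; omega
      have hPB : PB J g (m+1) = PB J g m * ∫ v in Set.Ioi (0:ℝ), ‖g m v‖ := by
        unfold PB
        rw [filter_lt_succ_of_mem J hm, Finset.prod_insert hnotm]; ring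
      have hLF : ∀ s : ℝ, LF J g (m+1) s = (∫ v in Set.Ioi (0:ℝ), g m v) * LF J g m s := by
        intro s
        unfold LF
        rw [filter_lt_succ_of_mem J hm, Finset.prod_insert hnotm, hK]; ring
      refine ⟨?_, ?_, ?_⟩
      · -- continuity
        intro ξ hξ s₀ hs₀
        obtain ⟨C, hC⟩ := (isCompact_Icc : IsCompact (Set.Icc (0:ℝ) (s₀+1))).exists_bound_of_continuousOn
          ((ihc ξ hξ).mono (Set.Icc_subset_Ici_self))
        set Fm := chainKernelIntegral g ξ m with hFm
        set I : ℝ → ℂ := fun s => ∫ v in Set.Ioi (0:ℝ),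
            (Set.Ioc (0:ℝ) (s/ξ)).indicator (fun v => g m v * Fm (s - ξ*v)) v with hI
        have hrep : ∀ s ∈ Set.Ici (0:ℝ), chainKernelIntegral g ξ (m+1) s = ξ • I s := by
          intro s hs
          rw [subst_eq hξ, interval_eq_indicator (div_nonneg hs hξ.le)]
        have hCWA : ContinuousWithinAt I (Set.Ici 0) s₀ := by
          apply MeasureTheory.tendsto_integral_filter_of_dominated_convergence (bound := fun v => ‖g m v‖ * C)
          · filter_upwards [eventually_mem_nhdsWithin] with s hs
            exact aesm_ind (hgm m hm) (ihc ξ hξ) hξ s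
          · filter_upwards [eventually_mem_nhdsWithin,
              mem_nhdsWithin_of_mem_nhds (Iic_mem_nhds (lt_add_one s₀))] with s hs0 hs1
            apply ae_of_all
            intro v
            by_cases hv : v ∈ Set.Ioc (0:ℝ) (s/ξ)
            · rw [Set.indicator_of_mem hv, norm_mul]
              apply mul_le_mul_of_nonneg_left ?_ (norm_nonneg (g m v))
              apply hC
              have hmul : ξ * v ≤ s := by rw [← le_div_iff₀' hξ]; exact hv.2
              have hpos : 0 < ξ * v := mul_pos hξ hv.1
              exact Set.mem_Icc.2 ⟨by linarith, by linarith [Set.mem_Iic.1 hs1]⟩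
            · rw [Set.indicator_of_notMem hv]
              have hC0 : 0 ≤ C := le_trans (norm_nonneg _) (hC 0 (Set.mem_Icc.2 ⟨le_rfl, by linarith [Set.mem_Ici.1 hs₀]⟩))
              simp only [norm_zero]
              positivity
          · exact (((hgi m hm).mono_set Set.Ioi_subset_Ici_self).norm).mul_const C
          · have h1 : ∀ᵐ v ∂(volume.restrict (Set.Ioi (0:ℝ))), v ∈ Set.Ioi (0:ℝ) :=
              ae_restrict_mem measurableSet_Ioi
            have h2 : ∀ᵐ v ∂(volume.restrict (Set.Ioi (0:ℝ))), v ≠ s₀/ξ := by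
              refine ae_iff.2 ?_
              have hset : {v : ℝ | ¬ v ≠ s₀/ξ} = {s₀/ξ} := by ext v; simp
              rw [hset, Measure.restrict_apply (measurableSet_singleton _)]
              exact measure_mono_null Set.inter_subset_left Real.volume_singleton
            filter_upwards [h1, h2] with v hv hne
            rcases lt_or_gt_of_ne hne with hlt | hgt
            · have hvs : ξ * v < s₀ := by rwa [← lt_div_iff₀' hξ]
              have hev : ∀ᶠ s in 𝓝[Set.Ici 0] s₀,
                  g m v * Fm (s - ξ*v)
                    = (Set.Ioc (0:ℝ) (s/ξ)).indicator (fun v => g m v * Fm (s - ξ*v)) v := by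
                filter_upwards [mem_nhdsWithin_of_mem_nhds (Ioi_mem_nhds hvs)] with s hs
                have hvmem : v ∈ Set.Ioc (0:ℝ) (s/ξ) := by
                  refine ⟨hv, ?_⟩
                  rw [le_div_iff₀' hξ]
                  exact hs.le
                simp only [Set.indicator_of_mem hvmem]
              have hvmem₀ : v ∈ Set.Ioc (0:ℝ) (s₀/ξ) := ⟨hv, hlt.le⟩
              have htarget : (Set.Ioc (0:ℝ) (s₀/ξ)).indicator (fun v => g m v * Fm (s₀ - ξ*v)) v
                  = g m v * Fm (s₀ - ξ*v) := Set.indicator_of_mem hvmem₀ _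
              rw [htarget]
              apply Tendsto.congr' hev
              apply Tendsto.const_mul
              have hcont : ContinuousAt Fm (s₀ - ξ*v) :=
                (ihc ξ hξ).continuousAt (Ici_mem_nhds (by linarith : (0:ℝ) < s₀ - ξ*v))
              exact hcont.tendsto.comp
                (((continuous_id.sub continuous_const).tendsto s₀).mono_left nhdsWithin_le_nhds)
            · have hvs : s₀ < ξ * v := by rwa [← div_lt_iff₀' hξ]
              have hev : ∀ᶠ s in 𝓝[Set.Ici 0] s₀,
                  (0:ℂ) = (Set.Ioc (0:ℝ) (s/ξ)).indicator (fun v => g m v * Fm (s - ξ*v)) v := by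
                filter_upwards [mem_nhdsWithin_of_mem_nhds (Iio_mem_nhds hvs)] with s hs
                refine (Set.indicator_of_notMem ?_ _).symm
                intro hmem
                exact absurd ((le_div_iff₀' hξ).1 hmem.2) (not_le.2 hs)
              have htarget : (Set.Ioc (0:ℝ) (s₀/ξ)).indicator (fun v => g m v * Fm (s₀ - ξ*v)) v
                  = 0 := Set.indicator_of_notMem (fun hmem => absurd hmem.2 (not_le.2 hgt)) _
              rw [htarget]
              exact Tendsto.congr' hev tendsto_const_nhds
        exact ContinuousWithinAt.congr (hCWA.const_smul ξ) hrep (hrep s₀ hs₀)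
      · -- bound
        intro ξ hξ s hs
        have hb : (0:ℝ) ≤ s / ξ := div_nonneg hs hξ.le
        rw [subst_eq hξ, hcard, hPB, hK]
        have hgint : IntervalIntegrable (g m) volume 0 (s/ξ) := by
          apply IntegrableOn.intervalIntegrable
          apply (hgi m hm).mono_set
          rw [Set.uIcc_of_le hb]
          exact fun x hx => hx.1
        have hFcont := affcont hξ (ihc ξ hξ) hs
        have hprod : IntervalIntegrable
            (fun v => g m v * chainKernelIntegral g ξ m (s - ξ*v)) volume 0 (s/ξ) :=
          hgint.mul_continuousOn hFcont
        set D : ℝ := ξ ^ cardJ J m * PB J g m * s ^ KK J m / (KK J m).factorial with hD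
        have hPB0 := PB_nonneg J g m
        have hD0 : 0 ≤ D := by
          rw [hD]
          exact div_nonneg (mul_nonneg (mul_nonneg (pow_nonneg hξ.le _) hPB0)
            (pow_nonneg hs _)) hKfac.le
        have step1 : ‖∫ v in (0:ℝ)..(s/ξ), g m v * chainKernelIntegral g ξ m (s - ξ*v)‖
            ≤ ∫ v in (0:ℝ)..(s/ξ), ‖g m v‖ * D := by
          refine le_trans (intervalIntegral.norm_integral_le_integral_norm hb) ?_
          apply intervalIntegral.integral_mono_on hb hprod.norm (hgint.norm.mul_const D)
          intro v hv
          rw [norm_mul]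
          apply mul_le_mul_of_nonneg_left ?_ (norm_nonneg (g m v))
          have hmul : ξ * v ≤ s := by rw [← le_div_iff₀' hξ]; exact hv.2
          have hvv : 0 ≤ v := hv.1
          have h1 : 0 ≤ s - ξ * v := by linarith
          refine le_trans (ihb ξ hξ (s - ξ*v) h1) ?_
          rw [hD]
          apply div_le_div_of_nonneg_right ?_ hKfac.le
          apply mul_le_mul_of_nonneg_left
            (pow_le_pow_left₀ h1 (by linarith [mul_nonneg hξ.le hvv] : s - ξ*v ≤ s) (KK J m))
            (mul_nonneg (pow_nonneg hξ.le _) hPB0)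
        have step2 : ∫ v in (0:ℝ)..(s/ξ), ‖g m v‖ * D
            ≤ D * ∫ v in Set.Ioi (0:ℝ), ‖g m v‖ := by
          rw [intervalIntegral.integral_mul_const, mul_comm]
          apply mul_le_mul_of_nonneg_left ?_ hD0
          rw [intervalIntegral.integral_of_le hb]
          apply setIntegral_mono_set (((hgi m hm).mono_set Set.Ioi_subset_Ici_self).norm)
            (ae_of_all _ fun v => norm_nonneg _)
            (HasSubset.Subset.eventuallyLE Set.Ioc_subset_Ioi_self)
        have hnorm : ‖ξ • ∫ v in (0:ℝ)..(s/ξ), g m v * chainKernelIntegral g ξ m (s - ξ*v)‖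
            = ξ * ‖∫ v in (0:ℝ)..(s/ξ), g m v * chainKernelIntegral g ξ m (s - ξ*v)‖ := by
          rw [norm_smul, Real.norm_eq_abs, abs_of_pos hξ]
        rw [hnorm]
        calc ξ * ‖∫ v in (0:ℝ)..(s/ξ), g m v * chainKernelIntegral g ξ m (s - ξ*v)‖
            ≤ ξ * (D * ∫ v in Set.Ioi (0:ℝ), ‖g m v‖) := by
              apply mul_le_mul_of_nonneg_left (le_trans step1 step2) hξ.le
          _ = ξ ^ (cardJ J m + 1) * (PB J g m * ∫ v in Set.Ioi (0:ℝ), ‖g m v‖)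
                * s ^ KK J m / (KK J m).factorial := by
              rw [hD]; ring
      · -- convergence
        intro s hs σ hσ hσ0
        have hev1 : ∀ᶠ ξ : ℝ in 𝓝[>] (0:ℝ), s/2 < σ ξ := hσ.eventually (eventually_gt_nhds (by linarith))
        have hevs1 : ∀ᶠ ξ : ℝ in 𝓝[>] (0:ℝ), σ ξ ≤ s + 1 :=
          hσ.eventually (eventually_le_nhds (by linarith))
        have heq : ∀ᶠ ξ : ℝ in 𝓝[>] (0:ℝ),
            (∫ v in Set.Ioi (0:ℝ), (Set.Ioc (0:ℝ) (σ ξ/ξ)).indicator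
              (fun v => g m v * ((1/(ξ:ℂ) ^ cardJ J m) * chainKernelIntegral g ξ m (σ ξ - ξ*v))) v)
            = (1 / (ξ:ℂ) ^ cardJ J (m+1)) * chainKernelIntegral g ξ (m+1) (σ ξ) := by
          filter_upwards [eventually_mem_nhdsWithin, hσ0] with ξ hξ hσξ
          have hξ0 : (0:ℝ) < ξ := hξ
          have hξC : (ξ:ℂ) ≠ 0 := Complex.ofReal_ne_zero.2 hξ0.ne'
          rw [hcard, subst_eq hξ0, Complex.real_smul]
          have hscal : ∀ z : ℂ, (1/(ξ:ℂ) ^ (cardJ J m + 1)) * ((ξ:ℂ) * z)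
              = (1/(ξ:ℂ) ^ cardJ J m) * z := by
            intro z; rw [pow_succ]; field_simp
          rw [hscal, ← intervalIntegral.integral_const_mul]
          rw [show (fun v => (1/(ξ:ℂ) ^ cardJ J m) * (g m v * chainKernelIntegral g ξ m (σ ξ - ξ*v)))
              = fun v => g m v * ((1/(ξ:ℂ) ^ cardJ J m) * chainKernelIntegral g ξ m (σ ξ - ξ*v)) from
            funext fun v => by ring]
          rw [interval_eq_indicator (div_nonneg hσξ hξ0.le)]
        have hlim : Tendsto (fun ξ : ℝ =>
            ∫ v in Set.Ioi (0:ℝ), (Set.Ioc (0:ℝ) (σ ξ/ξ)).indicator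
              (fun v => g m v * ((1/(ξ:ℂ) ^ cardJ J m) * chainKernelIntegral g ξ m (σ ξ - ξ*v))) v)
            (𝓝[>] (0:ℝ)) (𝓝 (∫ v in Set.Ioi (0:ℝ), g m v * LF J g m s)) := by
          apply MeasureTheory.tendsto_integral_filter_of_dominated_convergence
            (bound := fun v => ‖g m v‖ * (PB J g m * (s+1) ^ KK J m / (KK J m).factorial))
          · filter_upwards [eventually_mem_nhdsWithin] with ξ hξ
            exact aesm_ind (hgm m hm) (continuousOn_const.mul (ihc ξ hξ)) hξ (σ ξ)
          · filter_upwards [eventually_mem_nhdsWithin, hσ0, hevs1] with ξ hξ hσξ hσs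
            have hξ0 : (0:ℝ) < ξ := hξ
            apply ae_of_all
            intro v
            by_cases hv : v ∈ Set.Ioc (0:ℝ) (σ ξ/ξ)
            · rw [Set.indicator_of_mem hv, norm_mul]
              apply mul_le_mul_of_nonneg_left ?_ (norm_nonneg (g m v))
              rw [norm_mul]
              have hmul : ξ * v ≤ σ ξ := by rw [← le_div_iff₀' hξ0]; exact hv.2
              have hu0 : 0 ≤ σ ξ - ξ * v := by linarith
              have hnn : ‖(1:ℂ)/(ξ:ℂ) ^ cardJ J m‖ = 1/ξ ^ cardJ J m := by
                rw [norm_div, norm_one, norm_pow, Complex.norm_real, Real.norm_eq_abs,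
                  abs_of_pos hξ0]
              rw [hnn]
              have hb := ihb ξ hξ0 (σ ξ - ξ*v) hu0
              have hpow : (σ ξ - ξ*v) ^ KK J m ≤ (s+1) ^ KK J m := by
                apply pow_le_pow_left₀ hu0
                have : 0 ≤ ξ * v := le_of_lt (mul_pos hξ0 hv.1)
                linarith
              have hfin : (1/ξ ^ cardJ J m) * ‖chainKernelIntegral g ξ m (σ ξ - ξ*v)‖
                  ≤ PB J g m * (s+1) ^ KK J m / (KK J m).factorial := by
                have h2 : (1/ξ ^ cardJ J m) * ‖chainKernelIntegral g ξ m (σ ξ - ξ*v)‖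
                    ≤ (1/ξ ^ cardJ J m) * (ξ ^ cardJ J m * PB J g m * (σ ξ - ξ*v) ^ KK J m
                        / (KK J m).factorial) := by
                  apply mul_le_mul_of_nonneg_left hb
                  positivity
                refine le_trans h2 ?_
                rw [show (1/ξ ^ cardJ J m) * (ξ ^ cardJ J m * PB J g m * (σ ξ - ξ*v) ^ KK J m
                    / (KK J m).factorial)
                    = PB J g m * (σ ξ - ξ*v) ^ KK J m / (KK J m).factorial from by
                  field_simp]
                gcongr
                exact PB_nonneg J g m
              exact hfin
            · rw [Set.indicator_of_notMem hv]
              simp only [norm_zero]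
              have := PB_nonneg J g m
              positivity
          · exact (((hgi m hm).mono_set Set.Ioi_subset_Ici_self).norm).mul_const _
          · have h1 : ∀ᵐ v ∂(volume.restrict (Set.Ioi (0:ℝ))), v ∈ Set.Ioi (0:ℝ) :=
              ae_restrict_mem measurableSet_Ioi
            filter_upwards [h1] with v hv
            have hv0 : (0:ℝ) < v := hv
            have hev2 : ∀ᶠ ξ : ℝ in 𝓝[>] (0:ℝ), ξ < s/(2*v) :=
              mem_nhdsWithin_of_mem_nhds (Iio_mem_nhds (by positivity))
            have hevmem : ∀ᶠ ξ : ℝ in 𝓝[>] (0:ℝ),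
                g m v * ((1/(ξ:ℂ) ^ cardJ J m) * chainKernelIntegral g ξ m (σ ξ - ξ*v))
                  = (Set.Ioc (0:ℝ) (σ ξ/ξ)).indicator
                    (fun v => g m v * ((1/(ξ:ℂ) ^ cardJ J m)
                      * chainKernelIntegral g ξ m (σ ξ - ξ*v))) v := by
              filter_upwards [eventually_mem_nhdsWithin, hev1, hev2] with ξ hξ h1' h2'
              have hξ0 : (0:ℝ) < ξ := hξ
              have hxv : ξ * v < s/2 := by
                have := mul_lt_mul_of_pos_right h2' hv0
                rwa [div_mul_eq_mul_div, mul_comm (2:ℝ) v, ← div_div,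
                  mul_div_assoc, div_self hv0.ne', mul_one] at this
              have hvmem : v ∈ Set.Ioc (0:ℝ) (σ ξ/ξ) := by
                refine ⟨hv0, ?_⟩
                rw [le_div_iff₀' hξ0]; linarith
              simp only [Set.indicator_of_mem hvmem]
            refine Tendsto.congr' hevmem ?_
            apply Tendsto.const_mul
            apply ihv s hs (fun ξ => σ ξ - ξ*v)
            · have h0 : Tendsto (fun ξ : ℝ => ξ*v) (𝓝[>] (0:ℝ)) (𝓝 0) := by
                have h0' : Tendsto (fun ξ : ℝ => ξ*v) (𝓝 (0:ℝ)) (𝓝 (0*v)) :=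
                  (continuous_mul_right v).tendsto 0
                rw [zero_mul] at h0'
                exact h0'.mono_left nhdsWithin_le_nhds
              simpa using hσ.sub h0
            · filter_upwards [eventually_mem_nhdsWithin, hev1, hev2] with ξ hξ h1' h2'
              have hξ0 : (0:ℝ) < ξ := hξ
              have hxv : ξ * v < s/2 := by
                have := mul_lt_mul_of_pos_right h2' hv0
                rwa [div_mul_eq_mul_div, mul_comm (2:ℝ) v, ← div_div,
                  mul_div_assoc, div_self hv0.ne', mul_one] at this
              linarith
        have hfin : ∫ v in Set.Ioi (0:ℝ), g m v * LF J g m s = LF J g (m+1) s := by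
          rw [MeasureTheory.integral_mul_const, hLF s]
        rw [← hfin]
        exact Tendsto.congr' heq hlim
    · -- trivial kernel case
      have hcard : cardJ J (m+1) = cardJ J m := by
        unfold cardJ; rw [filter_lt_succ_of_not_mem J hm]
      have hK : KK J (m+1) = KK J m + 1 := by
        unfold KK; rw [hcard]; omega
      have hPB : PB J g (m+1) = PB J g m := by
        unfold PB; rw [filter_lt_succ_of_not_mem J hm]
      have hrep : ∀ ξ : ℝ, ∀ s : ℝ, chainKernelIntegral g ξ (m+1) s
          = ∫ u in (0:ℝ)..s, chainKernelIntegral g ξ m u := by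
        intro ξ s
        rw [chain_succ]
        apply intervalIntegral.integral_congr
        intro u _
        simp only [hg1 m hm, one_mul]
      refine ⟨?_, ?_, ?_⟩
      · -- continuity
        intro ξ hξ s₀ hs₀
        have hfun : chainKernelIntegral g ξ (m+1)
            = fun s => ∫ u in (0:ℝ)..s, chainKernelIntegral g ξ m u := funext (hrep ξ)
        rw [hfun]
        have hint : IntegrableOn (chainKernelIntegral g ξ m) (Set.Icc 0 (s₀+1)) volume :=
          ((ihc ξ hξ).mono Set.Icc_subset_Ici_self).integrableOn_Icc
        have hprim := intervalIntegral.continuousOn_primitive_interval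
          (a := 0) (b := s₀+1) (by
            rwa [Set.uIcc_of_le (by linarith [Set.mem_Ici.1 hs₀] : (0:ℝ) ≤ s₀+1)])
        rw [Set.uIcc_of_le (by linarith [Set.mem_Ici.1 hs₀] : (0:ℝ) ≤ s₀+1)] at hprim
        have h2 := hprim s₀ ⟨hs₀, by linarith⟩
        apply h2.mono_of_mem_nhdsWithin
        have ha : Set.Ici (0:ℝ) ∩ Set.Iic (s₀+1) ∈ 𝓝[Set.Ici 0] s₀ :=
          Filter.inter_mem self_mem_nhdsWithin
            (mem_nhdsWithin_of_mem_nhds (Iic_mem_nhds (lt_add_one s₀)))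
        rwa [Set.Ici_inter_Iic] at ha
      · -- bound
        intro ξ hξ s hs
        rw [hrep ξ s, hcard, hPB, hK]
        have hmono : ∫ u in (0:ℝ)..s, ‖chainKernelIntegral g ξ m u‖
            ≤ ∫ u in (0:ℝ)..s,
              (ξ ^ cardJ J m * PB J g m / (KK J m).factorial) * u ^ KK J m := by
          apply intervalIntegral.integral_mono_on hs ((FmIntInt (ihc ξ hξ) hs).norm)
            (((continuous_const.mul (continuous_pow _)).intervalIntegrable _ _))
          intro u hu
          refine le_trans (ihb ξ hξ u hu.1) (le_of_eq ?_)
          simp only [Pi.mul_apply]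
          ring
        have hval : ∫ u in (0:ℝ)..s,
            (ξ ^ cardJ J m * PB J g m / (KK J m).factorial) * u ^ KK J m
            = ξ ^ cardJ J m * PB J g m * s ^ (KK J m + 1) / (KK J m + 1).factorial := by
          rw [intervalIntegral.integral_const_mul, integral_pow, Nat.factorial_succ]
          rw [zero_pow (Nat.succ_ne_zero _), sub_zero]
          push_cast
          rw [div_mul_div_comm, mul_comm ((KK J m : ℝ) + 1) _, pow_succ]
        calc ‖∫ u in (0:ℝ)..s, chainKernelIntegral g ξ m u‖
            ≤ ∫ u in (0:ℝ)..s, ‖chainKernelIntegral g ξ m u‖ :=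
              intervalIntegral.norm_integral_le_integral_norm hs
          _ ≤ ∫ u in (0:ℝ)..s,
              (ξ ^ cardJ J m * PB J g m / (KK J m).factorial) * u ^ KK J m := hmono
          _ = _ := hval
      · -- convergence
        intro s hs σ hσ hσ0
        have hevs1 : ∀ᶠ ξ : ℝ in 𝓝[>] (0:ℝ), σ ξ ≤ s + 1 :=
          hσ.eventually (eventually_le_nhds (by linarith))
        have heq : ∀ᶠ ξ : ℝ in 𝓝[>] (0:ℝ),
            (∫ v in Set.Ioi (0:ℝ), (Set.Ioc (0:ℝ) (σ ξ)).indicator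
              (fun u => (1/(ξ:ℂ) ^ cardJ J m) * chainKernelIntegral g ξ m u) v)
            = (1 / (ξ:ℂ) ^ cardJ J (m+1)) * chainKernelIntegral g ξ (m+1) (σ ξ) := by
          filter_upwards [hσ0] with ξ hσξ
          rw [hcard, hrep ξ (σ ξ), ← intervalIntegral.integral_const_mul,
            interval_eq_indicator hσξ]
        have hlim : Tendsto (fun ξ : ℝ =>
            ∫ v in Set.Ioi (0:ℝ), (Set.Ioc (0:ℝ) (σ ξ)).indicator
              (fun u => (1/(ξ:ℂ) ^ cardJ J m) * chainKernelIntegral g ξ m u) v)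
            (𝓝[>] (0:ℝ))
            (𝓝 (∫ v in Set.Ioi (0:ℝ), (Set.Ioc (0:ℝ) s).indicator (fun u => LF J g m u) v)) := by
          apply MeasureTheory.tendsto_integral_filter_of_dominated_convergence
            (bound := (Set.Ioc (0:ℝ) (s+1)).indicator
              (fun _ => PB J g m * (s+1) ^ KK J m / (KK J m).factorial))
          · filter_upwards [eventually_mem_nhdsWithin, hσ0] with ξ hξ hσξ
            rw [aestronglyMeasurable_indicator_iff measurableSet_Ioc,
              Measure.restrict_restrict measurableSet_Ioc,
              Set.inter_eq_self_of_subset_left Set.Ioc_subset_Ioi_self]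
            exact (continuousOn_const.mul ((ihc ξ hξ).mono
              (fun x hx => Set.mem_of_mem_of_subset hx
                (fun y hy => hy.1.le)))).aestronglyMeasurable measurableSet_Ioc
          · filter_upwards [eventually_mem_nhdsWithin, hσ0, hevs1] with ξ hξ hσξ hσs
            have hξ0 : (0:ℝ) < ξ := hξ
            apply ae_of_all
            intro v
            by_cases hv : v ∈ Set.Ioc (0:ℝ) (σ ξ)
            · have hv2 : v ∈ Set.Ioc (0:ℝ) (s+1) := ⟨hv.1, le_trans hv.2 hσs⟩
              rw [Set.indicator_of_mem hv, Set.indicator_of_mem hv2, norm_mul]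
              have hnn : ‖(1:ℂ)/(ξ:ℂ) ^ cardJ J m‖ = 1/ξ ^ cardJ J m := by
                rw [norm_div, norm_one, norm_pow, Complex.norm_real, Real.norm_eq_abs,
                  abs_of_pos hξ0]
              rw [hnn]
              have hb := ihb ξ hξ0 v hv.1.le
              have h2 : (1/ξ ^ cardJ J m) * ‖chainKernelIntegral g ξ m v‖
                  ≤ (1/ξ ^ cardJ J m) * (ξ ^ cardJ J m * PB J g m * v ^ KK J m
                      / (KK J m).factorial) := by
                apply mul_le_mul_of_nonneg_left hb
                positivity
              refine le_trans h2 ?_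
              rw [show (1/ξ ^ cardJ J m) * (ξ ^ cardJ J m * PB J g m * v ^ KK J m
                  / (KK J m).factorial) = PB J g m * v ^ KK J m / (KK J m).factorial from by
                field_simp]
              gcongr
              · exact PB_nonneg J g m
              · exact hv.1.le
              · linarith [hv.2, hσs]
            · rw [Set.indicator_of_notMem hv]
              simp only [norm_zero]
              apply Set.indicator_nonneg
              intro x _
              have := PB_nonneg J g m
              positivity
          · rw [integrable_indicator_iff measurableSet_Ioc]
            apply (integrableOn_const_iff (by simp)).2
            right
            calc (volume.restrict (Set.Ioi (0:ℝ))) (Set.Ioc 0 (s+1))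
                ≤ volume (Set.Ioc (0:ℝ) (s+1)) := by
                  rw [Measure.restrict_apply measurableSet_Ioc]
                  exact measure_mono Set.inter_subset_left
              _ < ⊤ := measure_Ioc_lt_top
          · have h1 : ∀ᵐ v ∂(volume.restrict (Set.Ioi (0:ℝ))), v ∈ Set.Ioi (0:ℝ) :=
              ae_restrict_mem measurableSet_Ioi
            have h2 : ∀ᵐ v ∂(volume.restrict (Set.Ioi (0:ℝ))), v ≠ s := by
              refine ae_iff.2 ?_
              have hset : {v : ℝ | ¬ v ≠ s} = {s} := by ext v; simp
              rw [hset, Measure.restrict_apply (measurableSet_singleton _)]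
              exact measure_mono_null Set.inter_subset_left Real.volume_singleton
            filter_upwards [h1, h2] with v hv hne
            have hv0 : (0:ℝ) < v := hv
            rcases lt_or_gt_of_ne hne with hlt | hgt
            · have hevmem : ∀ᶠ ξ : ℝ in 𝓝[>] (0:ℝ),
                  (1/(ξ:ℂ) ^ cardJ J m) * chainKernelIntegral g ξ m v
                    = (Set.Ioc (0:ℝ) (σ ξ)).indicator
                      (fun u => (1/(ξ:ℂ) ^ cardJ J m) * chainKernelIntegral g ξ m u) v := by
                filter_upwards [hσ.eventually (eventually_gt_nhds hlt)] with ξ hgt'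
                have hvmem : v ∈ Set.Ioc (0:ℝ) (σ ξ) := ⟨hv0, hgt'.le⟩
                simp only [Set.indicator_of_mem hvmem]
              have hv2 : v ∈ Set.Ioc (0:ℝ) s := ⟨hv0, hlt.le⟩
              rw [Set.indicator_of_mem hv2]
              refine Tendsto.congr' hevmem ?_
              exact ihv v hv0 (fun _ => v) tendsto_const_nhds
                (Eventually.of_forall fun _ => hv0.le)
            · have hevmem : ∀ᶠ ξ : ℝ in 𝓝[>] (0:ℝ),
                  (0:ℂ) = (Set.Ioc (0:ℝ) (σ ξ)).indicator
                      (fun u => (1/(ξ:ℂ) ^ cardJ J m) * chainKernelIntegral g ξ m u) v := by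
                filter_upwards [hσ.eventually (eventually_lt_nhds hgt)] with ξ hlt'
                exact (Set.indicator_of_notMem (fun hmem => absurd hmem.2 (not_le.2 hlt')) _).symm
              rw [Set.indicator_of_notMem (fun hmem => absurd hmem.2 (not_le.2 hgt))]
              exact Tendsto.congr' hevmem tendsto_const_nhds
        have hfin : ∫ v in Set.Ioi (0:ℝ), (Set.Ioc (0:ℝ) s).indicator (fun u => LF J g m u) v
            = LF J g (m+1) s := by
          rw [← interval_eq_indicator hs.le]
          unfold LF
          rw [hK, filter_lt_succ_of_not_mem J hm]
          rw [show (fun u : ℝ => (u:ℂ) ^ KK J m / (KK J m).factorial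
              * ∏ j ∈ J.filter (fun j => j < m), ∫ v in Set.Ioi (0:ℝ), g j v)
              = fun u : ℝ => ((∏ j ∈ J.filter (fun j => j < m), ∫ v in Set.Ioi (0:ℝ), g j v)
                  / (KK J m).factorial) * (((u ^ KK J m : ℝ) : ℂ)) from by
            funext u; push_cast; ring]
          rw [intervalIntegral.integral_const_mul, intervalIntegral.integral_ofReal,
            integral_pow, Nat.factorial_succ]
          have hfac : ((KK J m).factorial : ℂ) ≠ 0 := Nat.cast_ne_zero.2 (Nat.factorial_ne_zero _)
          have hsucc : ((KK J m : ℂ) + 1) ≠ 0 := by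
            have hcast : ((KK J m : ℂ) + 1) = ((KK J m + 1 : ℕ) : ℂ) := by push_cast; ring
            rw [hcast]
            exact Nat.cast_ne_zero.2 (Nat.succ_ne_zero _)
          rw [zero_pow (Nat.succ_ne_zero _), sub_zero]
          push_cast
          field_simp
        rw [← hfin]
        exact Tendsto.congr' heq hlim

end LowDensityAux

open LowDensityAux in
/-- Contribution of a partially connected diagram in the low density limit: in the
`n`-fold simplex integral with rescaled kernels `h_j((t_j − t_{j+1})/ξ)` inserted only
for `j` in a subset `J` of `{1,…,n−1}` (kernels for `j ∉ J` replaced by `1`), one has,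
with `k = n − |J|`,
`ξ^{−|J|} ∫_0^t dt₁ ⋯ ∫_0^{t_{n−1}} dt_n Π_{j∈J} h_j((t_j − t_{j+1})/ξ)
  → (t^k / k!) ⋅ Π_{j∈J} ∫_0^∞ h_j(s) ds` as `ξ → 0⁺`. -/
theorem lowDensity_partially_connected_diagram_limit
    (n : ℕ) (hn : 1 ≤ n)
    (J : Finset ℕ) (hJ : J ⊆ Finset.range (n - 1))
    (h : ℕ → ℝ → ℂ) (hh : ∀ j ∈ J, IntegrableOn (h j) (Set.Ici (0 : ℝ)))
    (t : ℝ) (ht : 0 < t) :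
    Tendsto
      (fun ξ : ℝ => (1 / ξ ^ J.card : ℂ) *
        ∫ t₁ in (0 : ℝ)..t,
          chainKernelIntegral (fun j => if j ∈ J then h j else fun _ => 1) ξ (n - 1) t₁)
      (𝓝[>] 0)
      (𝓝 (((t : ℂ) ^ (n - J.card) / (n - J.card).factorial) *
        ∏ j ∈ J, ∫ s in Set.Ioi (0 : ℝ), h j s)) := by
  classical
  have hJn : ∀ j ∈ J, j < n - 1 := fun j hj => Finset.mem_range.1 (hJ hj)
  have hJn' : ∀ j ∈ J, j < n := fun j hj => lt_of_lt_of_le (hJn j hj) (Nat.sub_le n 1)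
  set gO : ℕ → ℝ → ℂ := fun j => if j ∈ J then h j else fun _ => 1 with hgO
  set g : ℕ → ℝ → ℂ :=
    fun j => if hj : j ∈ J then (hh j hj).1.mk (h j) else fun _ => (1 : ℂ) with hgdef
  have hg1 : ∀ j ∉ J, ∀ x : ℝ, g j x = 1 := by
    intro j hj x; simp only [hgdef, dif_neg hj]
  have hgm : ∀ j ∈ J, StronglyMeasurable (g j) := by
    intro j hj; simp only [hgdef, dif_pos hj]; exact (hh j hj).1.stronglyMeasurable_mk
  have hgae : ∀ j, gO j =ᵐ[volume.restrict (Set.Ici (0 : ℝ))] g j := by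
    intro j
    by_cases hj : j ∈ J
    · simp only [hgO, if_pos hj, hgdef, dif_pos hj]
      exact (hh j hj).1.ae_eq_mk
    · simp only [hgO, if_neg hj, hgdef, dif_neg hj]
      exact Filter.EventuallyEq.rfl
  have hgi : ∀ j ∈ J, IntegrableOn (g j) (Set.Ici (0 : ℝ)) := by
    intro j hj
    have := (hh j hj).congr ((hh j hj).1.ae_eq_mk)
    rw [show g j = (hh j hj).1.mk (h j) by simp only [hgdef, dif_pos hj]]; exact this
  have hgint : ∀ j ∈ J, (∫ v in Set.Ioi (0 : ℝ), g j v) = ∫ v in Set.Ioi (0 : ℝ), h j v := by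
    intro j hj
    apply MeasureTheory.integral_congr_ae
    have := ae_restrict_of_ae_restrict_of_subset Set.Ioi_subset_Ici_self (hgae j)
    filter_upwards [this] with x hx
    simpa only [hgO, if_pos hj] using hx.symm
  have hfilter : J.filter (fun j => j < n) = J := Finset.filter_true_of_mem hJn'
  have hcn : cardJ J n = J.card := by unfold cardJ; rw [hfilter]
  have hconv := ((key J g hg1 hgm hgi n).2.2) t ht (fun _ => t) tendsto_const_nhds
    (Eventually.of_forall fun _ => ht.le)
  have hmain : ∀ᶠ ξ : ℝ in 𝓝[>] (0 : ℝ),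
      (1 / (ξ : ℂ) ^ cardJ J n) * chainKernelIntegral g ξ n t
        = (1 / (ξ : ℂ) ^ J.card) *
            ∫ t₁ in (0 : ℝ)..t, chainKernelIntegral gO ξ (n - 1) t₁ := by
    filter_upwards [eventually_mem_nhdsWithin] with ξ hξ
    have hξ0 : (0 : ℝ) < ξ := hξ
    have h1 : chainKernelIntegral gO ξ n t
        = ∫ t₁ in (0 : ℝ)..t, chainKernelIntegral gO ξ (n - 1) t₁ := by
      conv_lhs => rw [show n = (n - 1) + 1 from (Nat.succ_pred_eq_of_pos hn).symm]
      rw [chain_succ]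
      apply intervalIntegral.integral_congr
      intro u _
      have hnm : (n - 1) ∉ J := fun hmem => lt_irrefl _ (hJn _ hmem)
      simp only [hgO, if_neg hnm, one_mul]
    rw [← h1, hcn, chain_congr gO g hgae hξ0 n t ht.le]
  refine Tendsto.congr' hmain ?_
  have htarget : LF J g n t
      = ((t : ℂ) ^ (n - J.card) / (n - J.card).factorial) *
          ∏ j ∈ J, ∫ s in Set.Ioi (0 : ℝ), h j s := by
    unfold LF KK
    rw [hcn, hfilter]
    congr 1
    exact Finset.prod_congr rfl hgint
  rw [← htarget]
  exact hconv
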